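/- Let V be a 2n-dimensional vector space over a field k of characteristic 2 with a nondegenerate symplectic form ⟨,⟩, and let sp(V) = {x ∈ gl(V) : ⟨xv,w⟩ + ⟨v,xw⟩ = 0 for all v,w ∈ V}. Then the map ξ ↦ α_ξ, where ξ(x) = tr(Xx) for all x ∈ sp(V) and α_ξ(v) = ⟨v, Xv⟩, is a well-defined linear isomorphism from the dual space sp(V)^* onto the space Q(V) of quadratic forms on V; in particular α_ξ does not depend on the choice of X ∈ gl(V) representing ξ. -/

import Mathlib

variable {k : Type*} [Field k] {V : Type*} [AddCommGroup V] [Module k V]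

/-- The symplectic Lie algebra `sp(V, ⟨,⟩)` as a submodule of `End(V)`. -/
def spAlg (B : V →ₗ[k] V →ₗ[k] k) : Submodule k (Module.End k V) where
  carrier := {x | ∀ v w : V, B (x v) w + B v (x w) = 0}
  add_mem' := by
    intro x y hx hy
    intro v w
    have h1 := hx v w
    have h2 := hy v w
    simp only [LinearMap.add_apply, map_add, LinearMap.add_apply] at *
    linear_combination h1 + h2
  zero_mem' := by
    intro v w
    simp
  smul_mem' := by
    intro c x hx v w
    have h := hx v w
    simp only [LinearMap.smul_apply, map_smul, LinearMap.smul_apply,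
      smul_eq_mul] at *
    linear_combination c * h


section SpAux

variable (B : V →ₗ[k] V →ₗ[k] k)

lemma two_eq_zero' [CharP k 2] : (2 : k) = 0 := by
  exact_mod_cast CharP.cast_eq_zero k 2

lemma bsymm [CharP k 2] (halt : ∀ v, B v v = 0) (v w : V) :
    B v w = B w v := by
  have h := halt (v + w)
  simp only [map_add, LinearMap.add_apply] at h
  have h2 : (2 : k) = 0 := two_eq_zero'
  linear_combination h - halt v - halt w - h2 * B w v

/-- The rank-one generators of `sp`. -/
noncomputable def sRone (w : V) : Module.End k V :=
  (B w).smulRight w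

lemma sRone_mem_sp [CharP k 2] (halt : ∀ v, B v v = 0) (w : V) :
    sRone B w ∈ spAlg B := by
  intro v u
  simp only [sRone, LinearMap.smulRight_apply, map_smul, LinearMap.smul_apply, smul_eq_mul,
    LinearMap.map_smul₂]
  have h2 : (2 : k) = 0 := two_eq_zero'
  have hs2 := bsymm B halt w v
  linear_combination (-(B w u)) * hs2 + (B w u * B w v) * h2

lemma cross_mem (u v : V) :
    (B u).smulRight v + (B v).smulRight u ∈
      Submodule.span k (Set.range (sRone B)) := by
  have key : (B u).smulRight v + (B v).smulRight u
      = sRone B (u + v) - sRone B u - sRone B v := by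
    ext w
    simp only [sRone, LinearMap.add_apply, LinearMap.sub_apply, LinearMap.smulRight_apply,
      map_add, LinearMap.add_apply, add_smul, smul_add]
    abel
  rw [key]
  have hg : ∀ w, sRone B w ∈ Submodule.span k (Set.range (sRone B)) :=
    fun w => Submodule.subset_span ⟨w, rfl⟩
  exact sub_mem (sub_mem (hg _) (hg _)) (hg _)

lemma sym_sum_mem {ι : Type*} (vs : ι → V) (c : ι → ι → k)
    (hc : ∀ i j, c i j = c j i) (s : Finset ι) :
    (∑ i ∈ s, ∑ j ∈ s, c i j • (B (vs i)).smulRight (vs j)) ∈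
      Submodule.span k (Set.range (sRone B)) := by
  classical
  induction s using Finset.induction_on with
  | empty => simp
  | insert a s ha ih =>
    have hg : ∀ w, sRone B w ∈ Submodule.span k (Set.range (sRone B)) :=
      fun w => Submodule.subset_span ⟨w, rfl⟩
    have key : (∑ i ∈ insert a s, ∑ j ∈ insert a s, c i j • (B (vs i)).smulRight (vs j))
        = c a a • sRone B (vs a)
          + (∑ j ∈ s, c a j • ((B (vs a)).smulRight (vs j) + (B (vs j)).smulRight (vs a)))
          + ∑ i ∈ s, ∑ j ∈ s, c i j • (B (vs i)).smulRight (vs j) := by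
      rw [Finset.sum_insert ha]
      simp only [Finset.sum_insert ha, smul_add, Finset.sum_add_distrib]
      rw [show (∑ i ∈ s, c i a • (B (vs i)).smulRight (vs a))
          = ∑ j ∈ s, c a j • (B (vs j)).smulRight (vs a) from
        Finset.sum_congr rfl fun j _ => by rw [hc]]
      unfold sRone
      abel
    rw [key]
    exact add_mem (add_mem (Submodule.smul_mem _ _ (hg _))
      (Submodule.sum_mem _ fun j _ => Submodule.smul_mem _ _ (cross_mem B _ _))) ih

lemma mem_span_sRone [CharP k 2] [FiniteDimensional k V]
    (halt : ∀ v, B v v = 0) (hnd : ∀ v, (∀ w, B v w = 0) → v = 0)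
    {x : Module.End k V} (hx : x ∈ spAlg B) :
    x ∈ Submodule.span k (Set.range (sRone B)) := by
  classical
  set e := Module.finBasis k V with he
  have hndB : LinearMap.BilinForm.Nondegenerate B :=
    ⟨hnd, fun w hw => hnd w (fun v => by rw [bsymm B halt]; exact hw v)⟩
  set f := LinearMap.BilinForm.dualBasis B hndB e with hf
  have hrep : ∀ u : V, ∑ j, B (e j) u • f j = u := by
    intro u
    have hco : ∀ j, B (e j) u = f.repr u j := fun j => by
      rw [hf, LinearMap.BilinForm.dualBasis_repr_apply]; exact bsymm B halt _ _
    rw [Finset.sum_congr rfl fun j _ => by rw [hco j]]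
    exact f.sum_repr u
  have h2 : (2 : k) = 0 := two_eq_zero'
  have hx' : ∀ v w, B v (x w) = B (x v) w := by
    intro v w
    have h := hx v w
    linear_combination h - h2 * B (x v) w
  set c : Fin (Module.finrank k V) → Fin (Module.finrank k V) → k :=
    fun i j => B (e j) (x (e i)) with hcdef
  have hcsymm : ∀ i j, c i j = c j i := by
    intro i j
    rw [hcdef]
    simp only
    rw [hx' (e j) (e i), bsymm B halt]
  have key : x = ∑ i, ∑ j, c i j • (B (f i)).smulRight (f j) := by
    refine e.ext fun l => ?_
    simp only [LinearMap.sum_apply, LinearMap.smul_apply, LinearMap.smulRight_apply]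
    rw [Finset.sum_congr rfl fun i _ => Finset.sum_congr rfl fun j _ => by
      rw [LinearMap.BilinForm.apply_dualBasis_left]]
    simp only [ite_smul, one_smul, zero_smul, smul_ite, smul_zero]
    rw [Finset.sum_comm]
    simp only [Finset.sum_ite_eq, Finset.mem_univ, if_true]
    exact (hrep (x (e l))).symm
  rw [key]
  exact sym_sum_mem B f c hcsymm Finset.univ

variable [FiniteDimensional k V]

lemma trace_smulRight' (f : Module.Dual k V) (u : V) :
    LinearMap.trace k V (f.smulRight u) = f u := by
  have h := LinearMap.trace_eq_contract_apply k V (f ⊗ₜ[k] u)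
  have h2 : (dualTensorHom k V V) (f ⊗ₜ[k] u) = f.smulRight u := by ext v; simp
  rw [h2, contractLeft_apply] at h; exact h

lemma trace_comp_smulRight (X : Module.End k V) (f : Module.Dual k V) (u : V) :
    LinearMap.trace k V (X * f.smulRight u) = f (X u) := by
  have h : X * f.smulRight u = f.smulRight (X u) := by
    ext v; simp [Module.End.mul_apply]
  rw [h, trace_smulRight']

/-- The trace pairing map `End V → Dual (sp)`. -/
noncomputable def Ttr : Module.End k V →ₗ[k] Module.Dual k (spAlg B) where
  toFun X := ((LinearMap.trace k V) ∘ₗ (LinearMap.mulLeft k X)) ∘ₗ (spAlg B).subtype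
  map_add' X Y := by
    ext x
    simp [LinearMap.mulLeft_apply, add_mul]
  map_smul' c X := by
    ext x
    simp [LinearMap.mulLeft_apply, smul_mul_assoc]

@[simp] lemma Ttr_apply (X : Module.End k V) (x : spAlg B) :
    Ttr B X x = LinearMap.trace k V (X * (x : Module.End k V)) := rfl

/-- The quadratic-form map `End V → Q(V)`. -/
noncomputable def PhiQ : Module.End k V →ₗ[k] QuadraticMap k V k where
  toFun X := LinearMap.BilinMap.toQuadraticMap (B.compl₂ X)
  map_add' X Y := by
    ext v
    simp [LinearMap.BilinMap.toQuadraticMap_apply]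
  map_smul' c X := by
    ext v
    simp [LinearMap.BilinMap.toQuadraticMap_apply]

@[simp] lemma PhiQ_apply (X : Module.End k V) (v : V) :
    PhiQ B X v = B v (X v) := by
  simp [PhiQ, LinearMap.BilinMap.toQuadraticMap_apply]

end SpAux

set_option maxHeartbeats 1000000 in
theorem sp_dual_iso_quadraticForms [CharP k 2] [FiniteDimensional k V]
    (n : ℕ) (hdim : Module.finrank k V = 2 * n)
    (B : V →ₗ[k] V →ₗ[k] k)
    (halt : ∀ v, B v v = 0)
    (hnd : ∀ v, (∀ w, B v w = 0) → v = 0) :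
    ∃ e : Module.Dual k (spAlg B) ≃ₗ[k] QuadraticMap k V k,
      ∀ (X : Module.End k V) (v : V),
        e (((LinearMap.trace k V) ∘ₗ (LinearMap.mulLeft k X)) ∘ₗ
            (spAlg B).subtype) v = B v (X v) := by
  classical
  have hndB : LinearMap.BilinForm.Nondegenerate B :=
    ⟨hnd, fun w hw => hnd w (fun v => by rw [bsymm B halt]; exact hw v)⟩
  have hsym := bsymm B halt
  -- trace against a generator
  have htrgen : ∀ (X : Module.End k V) (w : V),
      LinearMap.trace k V (X * sRone B w) = B w (X w) := by
    intro X w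
    rw [sRone, trace_comp_smulRight]
  -- kernel comparison, direction 1
  have hd1 : ∀ X : Module.End k V, Ttr B X = 0 → PhiQ B X = 0 := by
    intro X hX
    ext v
    have h := DFunLike.congr_fun hX ⟨sRone B v, sRone_mem_sp B halt v⟩
    rw [Ttr_apply, htrgen] at h
    simpa using h
  -- kernel comparison, direction 2
  have hd2 : ∀ X : Module.End k V, PhiQ B X = 0 → Ttr B X = 0 := by
    intro X hX
    ext x
    obtain ⟨x, hx⟩ := x
    set L : Module.End k V →ₗ[k] k :=
      (LinearMap.trace k V) ∘ₗ (LinearMap.mulLeft k X) with hL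
    have hspan : Submodule.span k (Set.range (sRone B)) ≤ LinearMap.ker L := by
      rw [Submodule.span_le]
      rintro _ ⟨w, rfl⟩
      have hq : B w (X w) = 0 := by
        have := DFunLike.congr_fun hX w
        simpa using this
      simpa [hL, LinearMap.mem_ker, LinearMap.mulLeft_apply, htrgen] using hq
    have := hspan (mem_span_sRone B halt hnd hx)
    simpa [hL, LinearMap.mem_ker, LinearMap.mulLeft_apply] using this
  -- surjectivity of the trace pairing map
  have hTsurj : Function.Surjective (Ttr B) := by
    intro ξ
    obtain ⟨g, hg⟩ := LinearMap.exists_extend ξ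
    let Θ : Module.End k V →ₗ[k] Module.Dual k (Module.End k V) :=
      { toFun := fun X => (LinearMap.trace k V) ∘ₗ (LinearMap.mulLeft k X)
        map_add' := fun X Y => by
          ext Z; simp [LinearMap.mulLeft_apply, add_mul]
        map_smul' := fun c X => by
          ext Z; simp [LinearMap.mulLeft_apply, smul_mul_assoc] }
    have hΘinj : Function.Injective Θ := by
      rw [← LinearMap.ker_eq_bot, LinearMap.ker_eq_bot']
      intro X hX0
      ext v
      apply hnd (X v)
      intro w
      have h := DFunLike.congr_fun hX0 ((B w).smulRight v)
      simp only [Θ, LinearMap.coe_mk, AddHom.coe_mk, LinearMap.comp_apply,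
        LinearMap.mulLeft_apply, LinearMap.zero_apply] at h
      rw [trace_comp_smulRight] at h
      rw [hsym]
      exact h
    have hfr : Module.finrank k (Module.End k V)
        = Module.finrank k (Module.Dual k (Module.End k V)) :=
      Subspace.dual_finrank_eq.symm
    have hΘsurj : Function.Surjective Θ :=
      (LinearMap.injective_iff_surjective_of_finrank_eq_finrank hfr).1 hΘinj
    obtain ⟨X, hXg⟩ := hΘsurj g
    refine ⟨X, ?_⟩
    have : Ttr B X = (Θ X) ∘ₗ (spAlg B).subtype := rfl
    rw [this, hXg, hg]
  -- surjectivity of PhiQ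
  have hΦsurj : Function.Surjective (PhiQ B) := by
    intro q
    obtain ⟨C, hC⟩ := LinearMap.BilinMap.toQuadraticMap_surjective q
    let bD := LinearMap.BilinForm.toDual B hndB
    refine ⟨bD.symm.toLinearMap ∘ₗ C.flip, ?_⟩
    ext v
    rw [PhiQ_apply]
    have h1 : B (bD.symm (C.flip v)) = C.flip v := by
      have := bD.apply_symm_apply (C.flip v)
      ext u
      rw [← LinearMap.BilinForm.toDual_def (B := B) hndB]
      exact DFunLike.congr_fun this u
    rw [LinearMap.comp_apply]
    rw [hsym]
    simp only [LinearEquiv.coe_coe]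
    rw [h1]
    simp only [LinearMap.flip_apply]
    rw [← hC, LinearMap.BilinMap.toQuadraticMap_apply]
  -- assemble the equivalence
  have hle : LinearMap.ker (Ttr B) ≤ LinearMap.ker (PhiQ B) := by
    intro X hX
    rw [LinearMap.mem_ker] at *
    exact hd1 X hX
  let e1 := (Ttr B).quotKerEquivOfSurjective hTsurj
  let ebar : Module.Dual k (spAlg B) →ₗ[k] QuadraticMap k V k :=
    ((LinearMap.ker (Ttr B)).liftQ (PhiQ B) hle) ∘ₗ e1.symm.toLinearMap
  have hfact : ∀ X : Module.End k V, ebar (Ttr B X) = PhiQ B X := by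
    intro X
    have h1 : e1 (Submodule.Quotient.mk X) = Ttr B X := rfl
    have h2 : e1.symm (Ttr B X) = Submodule.Quotient.mk X := by
      rw [← h1, LinearEquiv.symm_apply_apply]
    show ((LinearMap.ker (Ttr B)).liftQ (PhiQ B) hle) (e1.symm (Ttr B X)) = PhiQ B X
    rw [h2]
    exact Submodule.liftQ_apply _ _ _
  have hsurj : Function.Surjective ebar := by
    intro q
    obtain ⟨X, hX⟩ := hΦsurj q
    obtain ⟨rfl⟩ := hX
    exact ⟨Ttr B X, hfact X⟩
  have hinj : Function.Injective ebar := by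
    rw [← LinearMap.ker_eq_bot, LinearMap.ker_eq_bot']
    intro ξ hξ
    obtain ⟨X, rfl⟩ := hTsurj ξ
    rw [hfact] at hξ
    exact hd2 X hξ
  refine ⟨LinearEquiv.ofBijective ebar ⟨hinj, hsurj⟩, fun X v => ?_⟩
  have hT : (((LinearMap.trace k V) ∘ₗ (LinearMap.mulLeft k X)) ∘ₗ (spAlg B).subtype)
      = Ttr B X := rfl
  rw [hT]
  have : (LinearEquiv.ofBijective ebar ⟨hinj, hsurj⟩) (Ttr B X) = PhiQ B X := by
    exact hfact X
  rw [this, PhiQ_apply]
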